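/- arXiv:2311.06821 — 2 statements merged into one kernel-verified Lean document; each statement's English description precedes it below -/
import Mathlib

section
/- Let n ≥ 1, 1 ≤ ℓ ≤ n and p ≥ 0. Let A ∈ M_n(ℝ⟦x⟧) be written in blocks A = [[A₁₁, A₁₂],[A₂₁, A₂₂]] with A₁₁ of size ℓ×ℓ and A₂₂ of size (n−ℓ)×(n−ℓ), and let G(x) = xI_ℓ ⊕ I_{n−ℓ}. Then, computing in matrices over the field of formal Laurent series ℝ((x)) (with ′ the formal derivative taken entrywise), G⁻¹·A·G − x^{p+1}·G⁻¹·G′ = [[A₁₁ − x^p I_ℓ, x⁻¹·A₁₂],[x·A₂₁, A₂₂]]; consequently the following are equivalent: (a) all entries of G⁻¹AG − x^{p+1}G⁻¹G′ lie in ℝ⟦x⟧; (b) every entry of A₁₂ is divisible by x; (c) the formal derivation ξ of ℝ⟦x,y₁,…,y_n⟧ defined by ξ(x) = x^{p+1} and ξ(y_i) = (A(x)·y)_i maps the ideal (x, y₁,…,y_ℓ) into itself (i.e. the formal vector field x^{p+1}∂_x + (A(x)·y)·∂_y leaves the linear subspace {x = 0, y₁ = ⋯ = y_ℓ = 0} formally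 invariant). -/
open scoped Topology
open Filter Set

noncomputable section

/-! ### Θ embedding and block matrices -/

/-- `Θ : ℂ → M₂(ℝ)`, `a+bi ↦ aI₂ + bJ₂`. -/
def theta (z : ℂ) : Matrix (Fin 2) (Fin 2) ℝ :=
  Matrix.of ![![z.re, -z.im], ![z.im, z.re]]

/-- Block index type `(Fin n₁ × Fin 2) ⊕ Fin n₂` for matrices `Θ(·) ⊕ ·`. -/
abbrev BIdx (n₁ n₂ : ℕ) := (Fin n₁ × Fin 2) ⊕ Fin n₂

/-- Real part of a complex polynomial, as a real polynomial. -/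
def reP (P : Polynomial ℂ) : Polynomial ℝ :=
  ∑ k ∈ Finset.range (P.natDegree + 1), Polynomial.C ((P.coeff k).re) * Polynomial.X ^ k

/-- Imaginary part of a complex polynomial, as a real polynomial. -/
def imP (P : Polynomial ℂ) : Polynomial ℝ :=
  ∑ k ∈ Finset.range (P.natDegree + 1), Polynomial.C ((P.coeff k).im) * Polynomial.X ^ k

/-- Order (valuation at 0) of a real polynomial, `⊤` for the zero polynomial. -/
def ordP (P : Polynomial ℝ) : ℕ∞ :=
  if P = 0 then ⊤ else (P.rootMultiplicity 0 : ℕ∞)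

/-- `P > 0`: `P` is eventually positive as `x → 0⁺`. -/
def evPos (P : Polynomial ℝ) : Prop :=
  ∀ᶠ x in 𝓝[>] (0 : ℝ), 0 < P.eval x

/-- `Θ` of a complex polynomial, as a 2×2 matrix of real polynomials. -/
def thetaPoly (P : Polynomial ℂ) : Matrix (Fin 2) (Fin 2) (Polynomial ℝ) :=
  Matrix.of ![![reP P, -imP P], ![imP P, reP P]]

/-- The exponential part `D = Θ(diag c) ⊕ diag d` as a matrix of real polynomials. -/
def expPartPoly {n₁ n₂ : ℕ} (c : Fin n₁ → Polynomial ℂ) (d : Fin n₂ → Polynomial ℝ) :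
    Matrix (BIdx n₁ n₂) (BIdx n₁ n₂) (Polynomial ℝ) :=
  Matrix.of fun i j =>
    match i, j with
    | Sum.inl (j₁, a), Sum.inl (k₁, b) => if j₁ = k₁ then thetaPoly (c j₁) a b else 0
    | Sum.inr j₁, Sum.inr k₁ => if j₁ = k₁ then d j₁ else 0
    | _, _ => 0

/-- The exponential part evaluated at `x : ℝ`. -/
def expPart {n₁ n₂ : ℕ} (c : Fin n₁ → Polynomial ℂ) (d : Fin n₂ → Polynomial ℝ) (x : ℝ) :
    Matrix (BIdx n₁ n₂) (BIdx n₁ n₂) ℝ :=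
  (expPartPoly c d).map (Polynomial.eval x)

/-- A residual part `C = Θ(C') ⊕ E`. -/
def resPart {n₁ n₂ : ℕ} (C' : Matrix (Fin n₁) (Fin n₁) ℂ) (E : Matrix (Fin n₂) (Fin n₂) ℝ) :
    Matrix (BIdx n₁ n₂) (BIdx n₁ n₂) ℝ :=
  Matrix.of fun i j =>
    match i, j with
    | Sum.inl (j₁, a), Sum.inl (k₁, b) => theta (C' j₁ k₁) a b
    | Sum.inr j₁, Sum.inr k₁ => E j₁ k₁
    | _, _ => 0

/-- Compatibility of the residual blocks `(C', E)` with the exponential data `(c, d)`. -/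
def Compatible {n₁ n₂ : ℕ} (c : Fin n₁ → Polynomial ℂ) (d : Fin n₂ → Polynomial ℝ)
    (C' : Matrix (Fin n₁) (Fin n₁) ℂ) (E : Matrix (Fin n₂) (Fin n₂) ℝ) : Prop :=
  (∀ j k, c j ≠ c k → C' j k = 0) ∧ (∀ j k, d j ≠ d k → E j k = 0)

/-- degrees of all entries of the exponential data are `≤ q - 1`. -/
def DegLT (q : ℕ) {n₁ n₂ : ℕ} (c : Fin n₁ → Polynomial ℂ) (d : Fin n₂ → Polynomial ℝ) : Prop :=
  (∀ j, (c j).degree < (q : ℕ)) ∧ ∀ j, (d j).degree < (q : ℕ)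

/-- The complex spectrum of a real square matrix. -/
def cSpec {ι : Type*} [Fintype ι] [DecidableEq ι] (C : Matrix ι ι ℝ) : Set ℂ :=
  spectrum ℂ (C.map fun r : ℝ => (r : ℂ))

/-- Good spectrum: no two complex eigenvalues differ by a nonzero integer. -/
def GoodSpec {ι : Type*} [Fintype ι] [DecidableEq ι] (C : Matrix ι ι ℝ) : Prop :=
  ∀ μ ∈ cSpec C, ∀ ν ∈ cSpec C, ∀ k : ℤ, k ≠ 0 → μ - ν ≠ (k : ℂ)

/-- All complex eigenvalues have strictly negative real part. -/
def NegSpec {ι : Type*} [Fintype ι] [DecidableEq ι] (C : Matrix ι ι ℝ) : Prop :=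
  ∀ μ ∈ cSpec C, μ.re < 0

/-- No dominant rotation: `ord (Re c_j) ≤ ord (Im c_j)` for every `j`. -/
def NoDominantRotation {n₁ : ℕ} (c : Fin n₁ → Polynomial ℂ) : Prop :=
  ∀ j, ordP (reP (c j)) ≤ ordP (imP (c j))

/-- The unstability index `u(D)`. -/
def uIndex {n₁ n₂ : ℕ} (c : Fin n₁ → Polynomial ℂ) (d : Fin n₂ → Polynomial ℝ) : ℕ :=
  2 * Set.ncard {j : Fin n₁ | evPos (reP (c j))} + Set.ncard {j : Fin n₂ | evPos (d j)}

/-! ### Power series utilities -/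

/-- Formal derivative of a power series. -/
def dX (f : PowerSeries ℝ) : PowerSeries ℝ :=
  PowerSeries.mk fun k => (k + 1 : ℝ) * PowerSeries.coeff (R := ℝ) (k + 1) f

/-- A polynomial viewed as a power series. -/
def polyPS (p : Polynomial ℝ) : PowerSeries ℝ :=
  PowerSeries.mk fun k => p.coeff k

/-- Ramification `f(x) ↦ f(x^r)` on power series. -/
def ramify (r : ℕ) (f : PowerSeries ℝ) : PowerSeries ℝ :=
  PowerSeries.mk fun k => if r ∣ k then PowerSeries.coeff (R := ℝ) (k / r) f else 0

/-- Evaluation at `x` of the truncation to degree `≤ N` of a power series (the `N`-jet). -/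
def jet (N : ℕ) (f : PowerSeries ℝ) (x : ℝ) : ℝ :=
  ∑ k ∈ Finset.range (N + 1), PowerSeries.coeff (R := ℝ) k f * x ^ k

/-! ### Taylor series of smooth functions and substitution of formal curves -/

variable {ι : Type*} [Fintype ι] [DecidableEq ι]
variable {F : Type*} [NormedAddCommGroup F] [NormedSpace ℝ F]

/-- Partial derivative in the `x` direction. -/
def pdX (f : ℝ × (ι → ℝ) → F) : ℝ × (ι → ℝ) → F := fun p => fderiv ℝ f p (1, 0)

/-- Partial derivative in the `y i` direction. -/
def pdY (i : ι) (f : ℝ × (ι → ℝ) → F) : ℝ × (ι → ℝ) → F :=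
  fun p => fderiv ℝ f p (0, Pi.single i 1)

/-- Iterated mixed partial derivative `∂_x^{α₀} ∂_y^{α} f`. -/
def mDeriv (α₀ : ℕ) (α : ι → ℕ) (f : ℝ × (ι → ℝ) → F) : ℝ × (ι → ℝ) → F :=
  (pdX)^[α₀] ((Finset.univ : Finset ι).toList.foldr (fun i g => (pdY i)^[α i] g) f)

/-- The Taylor series at the origin of a smooth germ `f : ℝ × ℝ^ι → ℝ`,
as a multivariate formal power series in the variables `Option ι`
(`none` is the `x` variable, `some i` is `y i`). -/
def taylorSeries (f : ℝ × (ι → ℝ) → ℝ) : MvPowerSeries (Option ι) ℝ :=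
  fun dd : Option ι →₀ ℕ =>
    (((dd none).factorial : ℝ) * ∏ i : ι, ((dd (some i)).factorial : ℝ))⁻¹ *
      mDeriv (dd none) (fun i => dd (some i)) f (0, 0)

/-- Substitution of a tuple `c` of one-variable power series (each of positive order)
into a multivariate power series. -/
def substC (c : Option ι → PowerSeries ℝ) (g : MvPowerSeries (Option ι) ℝ) : PowerSeries ℝ :=
  PowerSeries.mk fun k =>
    ∑ dd ∈ Finset.Iic ((Finsupp.equivFunOnFinite).symm fun _ : Option ι => k),
      MvPowerSeries.coeff (R := ℝ) dd g * PowerSeries.coeff (R := ℝ) k (∏ v : Option ι, c v ^ dd v)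

/-- The formal curve `(x, Γ(x))` as a tuple of one-variable power series. -/
def curveOf (Γ : ι → PowerSeries ℝ) : Option ι → PowerSeries ℝ :=
  fun v => v.elim PowerSeries.X Γ

end

/-- A one-variable power series viewed as a multivariate power series in the variables
`Option (Fin n)`, depending only on the variable `none` (the `x` variable). -/
noncomputable def embX {n : ℕ} (f : PowerSeries ℝ) : MvPowerSeries (Option (Fin n)) ℝ :=
  fun dd : Option (Fin n) →₀ ℕ =>
    if dd = Finsupp.single none (dd none) then PowerSeries.coeff (R := ℝ) (dd none) f else 0

/-- The ideal `(x, y₁, …, y_ℓ)` of `ℝ⟦x, y₁, …, y_n⟧`. -/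
noncomputable def idealXY (n ℓ : ℕ) : Ideal (MvPowerSeries (Option (Fin n)) ℝ) :=
  Ideal.span ({MvPowerSeries.X none} ∪
    {g | ∃ j : Fin n, (j : ℕ) < ℓ ∧ g = MvPowerSeries.X (some j)})

lemma coeff_embX {n : ℕ} (f : PowerSeries ℝ) (dd : Option (Fin n) →₀ ℕ) :
    MvPowerSeries.coeff (R := ℝ) dd (embX f) =
      if dd = Finsupp.single none (dd none) then PowerSeries.coeff (R := ℝ) (dd none) f else 0 := rfl

lemma embX_X_mul {n : ℕ} (f : PowerSeries ℝ) :
    embX (n := n) (PowerSeries.X * f) = MvPowerSeries.X none * embX f := by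
  ext dd
  rw [MvPowerSeries.X, MvPowerSeries.coeff_monomial_mul, coeff_embX]
  by_cases h1 : Finsupp.single (none : Option (Fin n)) 1 ≤ dd
  · rw [if_pos h1, one_mul, coeff_embX]
    have hd1 : (1 : ℕ) ≤ dd none := Finsupp.single_le_iff.mp h1
    by_cases h2 : dd = Finsupp.single none (dd none)
    · rw [if_pos h2]
      have hsub : dd - Finsupp.single (none : Option (Fin n)) 1
          = Finsupp.single none (dd none - 1) := by
        conv_lhs => rw [h2]
        rw [Finsupp.single_tsub]
      rw [hsub]
      have : (Finsupp.single (none : Option (Fin n)) (dd none - 1)) none = dd none - 1 := by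
        simp
      rw [if_pos (by rw [this]), this]
      have hm : dd none = (dd none - 1) + 1 := (Nat.succ_pred_eq_of_pos hd1).symm
      rw [hm, PowerSeries.coeff_succ_X_mul]
      simp
    · rw [if_neg h2, if_neg]
      intro hc
      apply h2
      ext v
      rcases v with _ | v
      · simp
      · have := congrFun (congrArg (fun g : Option (Fin n) →₀ ℕ => (g : Option (Fin n) → ℕ)) hc) (some v)
        simp only [Finsupp.coe_tsub, Pi.sub_apply, Finsupp.single_apply] at this ⊢
        simp only [reduceCtorEq, if_false] at this ⊢
        omega
  · rw [if_neg h1]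
    have hd0 : dd none = 0 := by
      by_contra hc
      exact h1 (Finsupp.single_le_iff.mpr (Nat.one_le_iff_ne_zero.mpr hc))
    by_cases h2 : dd = Finsupp.single none (dd none)
    · rw [if_pos h2, hd0]
      simp [PowerSeries.coeff_zero_eq_constantCoeff, map_mul]
    · rw [if_neg h2]

lemma X_none_mem_idealXY (n ℓ : ℕ) :
    MvPowerSeries.X (none : Option (Fin n)) ∈ idealXY n ℓ :=
  Ideal.subset_span (Or.inl rfl)

lemma X_some_mem_idealXY (n ℓ : ℕ) (j : Fin n) (hj : (j : ℕ) < ℓ) :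
    MvPowerSeries.X (some j) ∈ idealXY n ℓ :=
  Ideal.subset_span (Or.inr ⟨j, hj, rfl⟩)

lemma embX_X_pow_mem (n ℓ p : ℕ) :
    embX (n := n) (PowerSeries.X ^ (p + 1)) ∈ idealXY n ℓ := by
  rw [pow_succ, mul_comm, embX_X_mul]
  exact Ideal.mul_mem_right _ _ (X_none_mem_idealXY n ℓ)

lemma coeff_eq_zero_of_mem_idealXY {n ℓ : ℕ} {g : MvPowerSeries (Option (Fin n)) ℝ}
    (hg : g ∈ idealXY n ℓ) (dd : Option (Fin n) →₀ ℕ) (h0 : dd none = 0)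
    (hy : ∀ j : Fin n, (j : ℕ) < ℓ → dd (some j) = 0) :
    MvPowerSeries.coeff (R := ℝ) dd g = 0 := by
  suffices h : ∀ dd : Option (Fin n) →₀ ℕ, dd none = 0 →
      (∀ j : Fin n, (j : ℕ) < ℓ → dd (some j) = 0) → MvPowerSeries.coeff (R := ℝ) dd g = 0 from
    h dd h0 hy
  clear h0 hy dd
  induction hg using Submodule.span_induction with
  | mem x hx =>
    intro dd h0 hy
    rcases hx with hx | ⟨j, hj, rfl⟩
    · rw [Set.mem_singleton_iff] at hx
      subst hx
      rw [MvPowerSeries.coeff_X, if_neg]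
      intro hc
      rw [hc] at h0
      simp at h0
    · rw [MvPowerSeries.coeff_X, if_neg]
      intro hc
      have := hy j hj
      rw [hc] at this
      simp at this
  | zero => simp
  | add x y _ _ hx hy' =>
    intro dd h0 hy
    rw [map_add, hx dd h0 hy, hy' dd h0 hy, add_zero]
  | smul a x _ hx =>
    intro dd h0 hy
    rw [smul_eq_mul, MvPowerSeries.coeff_mul]
    apply Finset.sum_eq_zero
    intro q hq
    rw [Finset.HasAntidiagonal.mem_antidiagonal] at hq
    have h2 : q.2 ≤ dd := by rw [← hq]; exact le_add_self
    rw [hx q.2 (by have := h2 none; omega)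
      (fun j hj => by have := h2 (some j); have := hy j hj; omega), mul_zero]

lemma coeff_single_sum {n : ℕ} (A : Fin n → PowerSeries ℝ) (k₀ : Fin n) :
    MvPowerSeries.coeff (R := ℝ) (Finsupp.single (some k₀ : Option (Fin n)) 1)
      (∑ k : Fin n, embX (A k) * MvPowerSeries.X (some k)) =
      PowerSeries.constantCoeff (R := ℝ) (A k₀) := by
  rw [map_sum]
  rw [Finset.sum_eq_single k₀]
  · rw [MvPowerSeries.X, MvPowerSeries.coeff_mul_monomial, if_pos le_rfl, mul_one,
      tsub_self, coeff_embX]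
    simp [PowerSeries.coeff_zero_eq_constantCoeff]
  · intro k _ hk
    rw [MvPowerSeries.X, MvPowerSeries.coeff_mul_monomial, if_neg]
    intro hc
    have := Finsupp.single_le_iff.mp hc
    rw [Finsupp.single_apply,
      if_neg (fun h => hk (Option.some_injective _ h).symm)] at this
    omega
  · simp

/-- key computation of Proposition 2.7: the gauge transform of the linear
system `x^{p+1}y′ = A(x)y` by `G = xI_ℓ ⊕ I_{n−ℓ}`, computed over formal Laurent series, and
the equivalence between admissibility of `G`, divisibility of the upper-right block of `A`
by `x`, and formal invariance of `{x = 0, y₁ = ⋯ = y_ℓ = 0}` for the associated derivation. -/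
theorem diagonal_monomial_gauge_transform
    (n ℓ p : ℕ) (hn : 1 ≤ n) (hℓ1 : 1 ≤ ℓ) (hℓn : ℓ ≤ n)
    (A : Matrix (Fin n) (Fin n) (PowerSeries ℝ)) :
    let ofPS : PowerSeries ℝ →+* LaurentSeries ℝ := HahnSeries.ofPowerSeries ℤ ℝ
    let XK : LaurentSeries ℝ := ofPS PowerSeries.X
    let G : Matrix (Fin n) (Fin n) (LaurentSeries ℝ) :=
      Matrix.diagonal fun i => if (i : ℕ) < ℓ then XK else 1
    let G' : Matrix (Fin n) (Fin n) (LaurentSeries ℝ) :=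
      Matrix.diagonal fun i => if (i : ℕ) < ℓ then 1 else 0
    let AK : Matrix (Fin n) (Fin n) (LaurentSeries ℝ) := A.map ofPS
    let L : Matrix (Fin n) (Fin n) (LaurentSeries ℝ) :=
      G⁻¹ * AK * G - XK ^ (p + 1) • (G⁻¹ * G')
    (L = Matrix.of fun i j : Fin n =>
        if (i : ℕ) < ℓ then
          (if (j : ℕ) < ℓ then AK i j - (if i = j then XK ^ p else 0) else XK⁻¹ * AK i j)
        else (if (j : ℕ) < ℓ then XK * AK i j else AK i j)) ∧
    ((∀ i j, L i j ∈ Set.range ofPS) ↔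
      (∀ i j : Fin n, (i : ℕ) < ℓ → ¬ (j : ℕ) < ℓ → PowerSeries.X ∣ A i j)) ∧
    ((∀ i j, L i j ∈ Set.range ofPS) ↔
      (embX (n := n) (PowerSeries.X ^ (p + 1)) ∈ idealXY n ℓ ∧
        ∀ j : Fin n, (j : ℕ) < ℓ →
          (∑ k : Fin n, embX (A j k) * MvPowerSeries.X (some k)) ∈ idealXY n ℓ)) := by
  intro ofPS XK G G' AK L
  have hXK : XK ≠ 0 := by
    intro h
    exact PowerSeries.X_ne_zero
      (HahnSeries.ofPowerSeries_injective (h.trans (map_zero ofPS).symm))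
  have hGinv : G⁻¹ = Matrix.diagonal fun i : Fin n => if (i : ℕ) < ℓ then XK⁻¹ else 1 := by
    apply Matrix.inv_eq_right_inv
    show Matrix.diagonal _ * Matrix.diagonal _ = 1
    rw [Matrix.diagonal_mul_diagonal]
    convert Matrix.diagonal_one with i
    by_cases hi : (i : ℕ) < ℓ
    · rw [if_pos hi, if_pos hi, mul_inv_cancel₀ hXK]
    · rw [if_neg hi, if_neg hi, mul_one]
  have hL : L = Matrix.of fun i j : Fin n =>
      if (i : ℕ) < ℓ then
        (if (j : ℕ) < ℓ then AK i j - (if i = j then XK ^ p else 0) else XK⁻¹ * AK i j)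
      else (if (j : ℕ) < ℓ then XK * AK i j else AK i j) := by
    apply Matrix.ext
    intro i j
    simp only [L, G, G', AK, hGinv, Matrix.sub_apply, Matrix.smul_apply, smul_eq_mul,
      Matrix.diagonal_mul_diagonal, Matrix.mul_diagonal, Matrix.diagonal_mul,
      Matrix.diagonal_apply, Matrix.of_apply]
    have h1 : ∀ a : LaurentSeries ℝ, XK⁻¹ * a * XK = a := fun a => by
      rw [mul_assoc, mul_comm a XK, inv_mul_cancel_left₀ hXK]
    have h2 : XK ^ (p + 1) * XK⁻¹ = XK ^ p := by
      rw [pow_succ, mul_assoc, mul_inv_cancel₀ hXK, mul_one]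
    by_cases hij : i = j
    · subst hij
      rw [if_pos rfl]
      by_cases hi : (i : ℕ) < ℓ <;>
        simp only [hi, ite_true, ite_false, if_pos rfl, mul_one, one_mul, mul_zero]
      · rw [h1, h2]
      · ring
    · rw [if_neg hij]
      by_cases hi : (i : ℕ) < ℓ <;> by_cases hj : (j : ℕ) < ℓ <;>
        simp only [hi, hj, ite_true, ite_false, if_neg hij, mul_zero, sub_zero,
          mul_one, one_mul]
      · rw [h1]
      · ring
  have hiff2 : (∀ i j, L i j ∈ Set.range ofPS) ↔
      (∀ i j : Fin n, (i : ℕ) < ℓ → ¬ (j : ℕ) < ℓ → PowerSeries.X ∣ A i j) := by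
    constructor
    · intro h i j hi hj
      have hh := h i j
      rw [hL] at hh
      simp only [Matrix.of_apply, if_pos hi, if_neg hj] at hh
      obtain ⟨B, hB⟩ := hh
      refine ⟨B, ?_⟩
      apply HahnSeries.ofPowerSeries_injective (Γ := ℤ) (R := ℝ)
      show ofPS (A i j) = ofPS (PowerSeries.X * B)
      rw [map_mul, hB, mul_inv_cancel_left₀ hXK]
      rfl
    · intro h i j
      rw [hL]
      simp only [Matrix.of_apply]
      by_cases hi : (i : ℕ) < ℓ <;> by_cases hj : (j : ℕ) < ℓ <;>
        simp only [hi, hj, ite_true, ite_false]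
      · by_cases hij : i = j
        · rw [if_pos hij]
          exact ⟨A i j - PowerSeries.X ^ p, by rw [map_sub, map_pow]; rfl⟩
        · rw [if_neg hij, sub_zero]
          exact ⟨A i j, rfl⟩
      · obtain ⟨B, hB⟩ := h i j hi hj
        refine ⟨B, ?_⟩
        have hAK : AK i j = XK * ofPS B := by
          show ofPS (A i j) = _
          rw [hB, map_mul]
        rw [hAK, inv_mul_cancel_left₀ hXK]
      · exact ⟨PowerSeries.X * A i j, by rw [map_mul]; rfl⟩
      · exact ⟨A i j, rfl⟩
  refine ⟨hL, hiff2, hiff2.trans ?_⟩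
  constructor
  · intro hdvd
    refine ⟨embX_X_pow_mem n ℓ p, ?_⟩
    intro j hj
    apply Ideal.sum_mem
    intro k _
    by_cases hk : (k : ℕ) < ℓ
    · exact Ideal.mul_mem_left _ _ (X_some_mem_idealXY n ℓ k hk)
    · obtain ⟨B, hB⟩ := hdvd j k hj hk
      rw [hB, embX_X_mul, mul_assoc]
      exact Ideal.mul_mem_right _ _ (X_none_mem_idealXY n ℓ)
  · rintro ⟨-, hsum⟩ i j hi hj
    rw [PowerSeries.X_dvd_iff]
    have h0 := coeff_eq_zero_of_mem_idealXY (hsum i hi)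
      (Finsupp.single (some j) 1) (by simp [Finsupp.single_apply])
      (fun j' hj' => by
        rw [Finsupp.single_apply, if_neg]
        intro heq
        have : j = j' := Option.some_injective _ heq
        omega)
    rw [coeff_single_sum] at h0
    exact h0
end

section
/- Let q ≥ 1, β > 0, n ≥ 1 and t₀ ∈ ℝ. Let a, b : (−∞,t₀] → (0,∞) and u, v : (−∞,t₀] → ℝ^n be C¹ with a′(t) = a(t)^{q+1} and b′(t) = b(t)^{q+1} for all t, and suppose |a(t) − b(t)| + ‖u(t) − v(t)‖ = O(e^{βt}) as t → −∞. Then a = b; moreover a is a strictly increasing C¹ bijection from (−∞,t₀] onto an interval (0,c], a(t) → 0 as t → −∞, and, writing ū(x) := u(a⁻¹(x)) and v̄(x) := v(a⁻¹(x)) for x ∈ (0,c], one has: for every ℓ ∈ ℕ, ‖ū(x) − v̄(x)‖ = o(x^ℓ) as x → 0⁺. -/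
open scoped Topology
open Filter Set

lemma my_abs_pow_sub_pow_le (q : ℕ) {x y M : ℝ} (hx : 0 ≤ x) (hy : 0 ≤ y)
    (hxM : x ≤ M) (hyM : y ≤ M) : |x ^ q - y ^ q| ≤ q * M ^ (q - 1) * |x - y| := by
  have hM : 0 ≤ M := hx.trans hxM
  rw [← geom_sum₂_mul x y q, abs_mul]
  gcongr
  calc |∑ i ∈ Finset.range q, x ^ i * y ^ (q - 1 - i)|
      ≤ ∑ i ∈ Finset.range q, |x ^ i * y ^ (q - 1 - i)| := Finset.abs_sum_le_sum_abs _ _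
    _ ≤ ∑ i ∈ Finset.range q, M ^ (q - 1) := by
        apply Finset.sum_le_sum
        intro i hi
        rw [Finset.mem_range] at hi
        rw [abs_mul, abs_pow, abs_pow, abs_of_nonneg hx, abs_of_nonneg hy]
        calc x ^ i * y ^ (q - 1 - i) ≤ M ^ i * M ^ (q - 1 - i) := by
              gcongr
          _ = M ^ (q - 1) := by rw [← pow_add]; congr 1; omega
    _ = q * M ^ (q - 1) := by rw [Finset.sum_const, Finset.card_range, nsmul_eq_mul]

lemma my_ode_invariant (q : ℕ) (hq : 1 ≤ q) (t₀ : ℝ) (a : ℝ → ℝ)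
    (hapos : ∀ t ∈ Iic t₀, 0 < a t)
    (ha : ∀ t ∈ Iic t₀, HasDerivWithinAt a (a t ^ (q + 1)) (Iic t₀) t) :
    ∀ t ∈ Iic t₀, (a t ^ q)⁻¹ + q * t = (a t₀ ^ q)⁻¹ + q * t₀ := by
  intro t ht
  set φ : ℝ → ℝ := fun s => (a s ^ q)⁻¹ + q * s with hφ
  have hder : ∀ s ∈ Iic t₀, HasDerivWithinAt φ 0 (Iic t₀) s := by
    intro s hs
    have hane : a s ≠ 0 := (hapos s hs).ne'
    have hpow : HasDerivWithinAt (fun r => a r ^ q)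
        ((q : ℝ) * a s ^ (q - 1) * a s ^ (q + 1)) (Iic t₀) s := (ha s hs).pow q
    have hne : a s ^ q ≠ 0 := pow_ne_zero _ hane
    have hinv := hpow.inv hne
    have hlin : HasDerivWithinAt (fun r : ℝ => (q : ℝ) * r) (q : ℝ) (Iic t₀) s := by
      simpa using ((hasDerivAt_id s).const_mul (q : ℝ)).hasDerivWithinAt
    have hsum := hinv.add hlin
    refine hsum.congr_deriv ?_
    have h1 : a s ^ (q - 1) * a s ^ (q + 1) = (a s ^ q) ^ 2 := by
      rw [← pow_add, ← pow_mul]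
      congr 1; omega
    rw [mul_assoc, h1]
    have h2 : ((a s ^ q) ^ 2 : ℝ) ≠ 0 := pow_ne_zero _ hne
    rw [neg_div, mul_div_assoc, div_self h2]; ring
  have hc := (convex_Iic t₀).norm_image_sub_le_of_norm_hasDerivWithin_le (C := 0) hder
      (fun s _ => by simp) (mem_Iic.mpr le_rfl) ht
  have h0 : ‖φ t - φ t₀‖ ≤ 0 := by simpa using hc
  have h1 := norm_le_zero_iff.mp h0
  have h2 := sub_eq_zero.mp h1
  simpa [hφ] using h2

lemma my_pow_exp_tendsto (c : ℝ) (hc : 0 < c) (q ℓ : ℕ) (hq : 1 ≤ q) :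
    Tendsto (fun y : ℝ => y ^ ℓ * Real.exp (-(c * y ^ q))) atTop (𝓝 0) := by
  have hbig : Tendsto (fun y : ℝ => y ^ ℓ * Real.exp (-(c * y))) atTop (𝓝 0) := by
    have h1 : Tendsto (fun z : ℝ => z ^ ℓ * Real.exp (-z)) atTop (𝓝 0) :=
      Real.tendsto_pow_mul_exp_neg_atTop_nhds_zero ℓ
    have h2 : Tendsto (fun y : ℝ => c * y) atTop atTop :=
      Tendsto.const_mul_atTop hc tendsto_id
    have h3 := h1.comp h2
    have h4 := h3.const_mul ((c : ℝ) ^ ℓ)⁻¹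
    rw [mul_zero] at h4
    apply h4.congr'
    filter_upwards [eventually_gt_atTop (0 : ℝ)] with y hy
    have : (c * y) ^ ℓ = c ^ ℓ * y ^ ℓ := mul_pow c y ℓ
    simp only [Function.comp_apply]
    rw [this, ← mul_assoc, ← mul_assoc, inv_mul_cancel₀ (pow_ne_zero _ hc.ne')]
    ring
  apply squeeze_zero' (f := fun y : ℝ => y ^ ℓ * Real.exp (-(c * y ^ q)))
    (g := fun y : ℝ => y ^ ℓ * Real.exp (-(c * y))) ?_ ?_ hbig
  · filter_upwards [eventually_ge_atTop (0 : ℝ)] with y hy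
    positivity
  · filter_upwards [eventually_ge_atTop (1 : ℝ)] with y hy
    have h0 : (0 : ℝ) ≤ y := le_trans zero_le_one hy
    have hy1 : y ≤ y ^ q := le_self_pow₀ (by linarith) (by omega)
    have hcy : c * y ≤ c * y ^ q := by nlinarith
    have hexp : Real.exp (-(c * y ^ q)) ≤ Real.exp (-(c * y)) :=
      Real.exp_le_exp.mpr (by linarith)
    have hyl : (0:ℝ) ≤ y ^ ℓ := by positivity
    nlinarith [Real.exp_pos (-(c * y ^ q))]

lemma my_lin_exp_tendsto (A B c : ℝ) (hc : 0 < c) :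
    Tendsto (fun t : ℝ => (A - B * t) * Real.exp (c * t)) atBot (𝓝 0) := by
  have h1 : Tendsto (fun y : ℝ => (A + B * y) * Real.exp (-(c * y))) atTop (𝓝 0) := by
    have ha : Tendsto (fun y : ℝ => A * Real.exp (-(c * y))) atTop (𝓝 0) := by
      have := (Real.tendsto_exp_atBot.comp
        ((tendsto_neg_atTop_atBot).comp (Tendsto.const_mul_atTop hc tendsto_id))).const_mul A
      rw [mul_zero] at this
      exact this.congr (fun y => by simp [Function.comp])
    have hb : Tendsto (fun y : ℝ => B * (y * Real.exp (-(c * y)))) atTop (𝓝 0) := by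
      have h := (my_pow_exp_tendsto c hc 1 1 le_rfl).const_mul B
      rw [mul_zero] at h
      exact h.congr (fun y => by simp)
    have := ha.add hb
    rw [add_zero] at this
    exact this.congr (fun y => by ring)
  have h2 := h1.comp tendsto_neg_atBot_atTop
  rw [show (0:ℝ) = 0 from rfl] at h2
  apply h2.congr
  intro t
  simp [Function.comp]
  ring_nf

/-- Proposition 3.3, accompanying trajectories: if two trajectories of a
vector field with `x`-component `x^{q+1}` (`q ≥ 1`) are exponentially close in natural time as
`t → −∞`, then their `x`-components coincide and, after reparametrizing by `x`, they have flat
contact at `x = 0⁺`. -/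
theorem accompanying_trajectories_flat_contact
    (q : ℕ) (hq : 1 ≤ q) (β : ℝ) (hβ : 0 < β) (n : ℕ) (hn : 1 ≤ n) (t₀ : ℝ)
    (a b : ℝ → ℝ) (u v : ℝ → Fin n → ℝ)
    (hapos : ∀ t ∈ Iic t₀, 0 < a t) (hbpos : ∀ t ∈ Iic t₀, 0 < b t)
    (ha : ∀ t ∈ Iic t₀, HasDerivWithinAt a (a t ^ (q + 1)) (Iic t₀) t)
    (hb : ∀ t ∈ Iic t₀, HasDerivWithinAt b (b t ^ (q + 1)) (Iic t₀) t)
    (hu : ContDiffOn ℝ 1 u (Iic t₀)) (hv : ContDiffOn ℝ 1 v (Iic t₀))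
    (hclose : (fun t => |a t - b t| + ‖u t - v t‖) =O[atBot] fun t => Real.exp (β * t)) :
    (∀ t ∈ Iic t₀, a t = b t) ∧
    StrictMonoOn a (Iic t₀) ∧
    a '' Iic t₀ = Ioc 0 (a t₀) ∧
    Tendsto a atBot (𝓝 0) ∧
    ∀ g : ℝ → ℝ, (∀ x ∈ Ioc (0 : ℝ) (a t₀), g x ∈ Iic t₀ ∧ a (g x) = x) →
      ∀ ℓ : ℕ, (fun x => u (g x) - v (g x)) =o[𝓝[>] (0 : ℝ)] fun x => x ^ ℓ := by
  clear hu hv hn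
  have hq0 : (0:ℝ) < (q:ℝ) := by exact_mod_cast hq
  set K : ℝ := (a t₀ ^ q)⁻¹ + q * t₀ with hKdef
  set L : ℝ := (b t₀ ^ q)⁻¹ + q * t₀ with hLdef
  have hKt : ∀ t ∈ Iic t₀, (a t ^ q)⁻¹ = K - q * t := by
    intro t ht
    have := my_ode_invariant q hq t₀ a hapos ha t ht
    rw [hKdef]; linarith
  have hLt : ∀ t ∈ Iic t₀, (b t ^ q)⁻¹ = L - q * t := by
    intro t ht
    have := my_ode_invariant q hq t₀ b hbpos hb t ht
    rw [hLdef]; linarith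
  have hKpos : ∀ t ∈ Iic t₀, 0 < K - q * t := by
    intro t ht
    rw [← hKt t ht]
    exact inv_pos.mpr (pow_pos (hapos t ht) q)
  have hLpos : ∀ t ∈ Iic t₀, 0 < L - q * t := by
    intro t ht
    rw [← hLt t ht]
    exact inv_pos.mpr (pow_pos (hbpos t ht) q)
  have haf : ∀ t ∈ Iic t₀, a t ^ q = (K - q * t)⁻¹ := by
    intro t ht; rw [← hKt t ht, inv_inv]
  have hbf : ∀ t ∈ Iic t₀, b t ^ q = (L - q * t)⁻¹ := by
    intro t ht; rw [← hLt t ht, inv_inv]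
  -- strict monotonicity
  have hmono : StrictMonoOn a (Iic t₀) := by
    apply strictMonoOn_of_deriv_pos (convex_Iic t₀)
      (fun t ht => (ha t ht).continuousWithinAt)
    intro t ht
    rw [interior_Iic] at ht
    have hda : HasDerivAt a (a t ^ (q+1)) t :=
      (ha t (mem_Iic.mpr ht.le)).hasDerivAt (Iic_mem_nhds ht)
    rw [hda.deriv]
    exact pow_pos (hapos t (mem_Iic.mpr ht.le)) _
  have hbmono : StrictMonoOn b (Iic t₀) := by
    apply strictMonoOn_of_deriv_pos (convex_Iic t₀)
      (fun t ht => (hb t ht).continuousWithinAt)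
    intro t ht
    rw [interior_Iic] at ht
    have hdb : HasDerivAt b (b t ^ (q+1)) t :=
      (hb t (mem_Iic.mpr ht.le)).hasDerivAt (Iic_mem_nhds ht)
    rw [hdb.deriv]
    exact pow_pos (hbpos t (mem_Iic.mpr ht.le)) _
  have hale : ∀ t ∈ Iic t₀, a t ≤ a t₀ :=
    fun t ht => hmono.monotoneOn ht (mem_Iic.mpr le_rfl) ht
  have hble : ∀ t ∈ Iic t₀, b t ≤ b t₀ :=
    fun t ht => hbmono.monotoneOn ht (mem_Iic.mpr le_rfl) ht
  -- exponential bound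
  obtain ⟨C, hC, hbd⟩ := hclose.exists_pos
  rw [Asymptotics.isBigOWith_iff] at hbd
  obtain ⟨T, hT⟩ := eventually_atBot.mp (hbd.and (eventually_le_atBot t₀))
  have habd : ∀ t ≤ T, |a t - b t| ≤ C * Real.exp (β * t) ∧
      ‖u t - v t‖ ≤ C * Real.exp (β * t) ∧ t ≤ t₀ := by
    intro t ht
    obtain ⟨h1, h2⟩ := hT t ht
    simp only [Real.norm_eq_abs, Real.abs_exp] at h1
    rw [abs_of_nonneg (by positivity)] at h1
    refine ⟨?_, ?_, h2⟩
    · have := norm_nonneg (u t - v t); linarith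
    · have := abs_nonneg (a t - b t); linarith
  -- K = L
  set M : ℝ := max (a t₀) (b t₀) with hMdef
  have hKL : K = L := by
    have key : ∀ t ≤ T, |K - L| ≤
        ((q * M ^ (q-1) * C) * (L - q * t)) * ((K - q * t) * Real.exp (β * t)) := by
      intro t ht
      obtain ⟨h1, _, ht₀⟩ := habd t ht
      have ht' : t ∈ Iic t₀ := ht₀
      have hKp := hKpos t ht'
      have hLp := hLpos t ht'
      have hap := hapos t ht'
      have hbp := hbpos t ht'
      have e1 : K - L = (a t ^ q)⁻¹ - (b t ^ q)⁻¹ := by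
        rw [hKt t ht', hLt t ht']; ring
      have e2 : (a t ^ q)⁻¹ - (b t ^ q)⁻¹ = (b t ^ q - a t ^ q) * ((K - q*t) * (L - q*t)) := by
        rw [← hKt t ht', ← hLt t ht']
        have h1' : a t ^ q ≠ 0 := (pow_pos hap q).ne'
        have h2' : b t ^ q ≠ 0 := (pow_pos hbp q).ne'
        field_simp
      have hpow := my_abs_pow_sub_pow_le q hbp.le hap.le
        ((hble t ht').trans (le_max_right _ _)) ((hale t ht').trans (le_max_left _ _))
      rw [e1, e2, abs_mul, abs_of_pos (mul_pos hKp hLp)]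
      have hba : |b t - a t| = |a t - b t| := abs_sub_comm _ _
      rw [hba] at hpow
      have hMq : (0:ℝ) ≤ (q:ℝ) * M ^ (q-1) := by
        have hM0 : (0:ℝ) ≤ M := le_trans (hapos t₀ (mem_Iic.mpr le_rfl)).le (le_max_left _ _)
        positivity
      calc |b t ^ q - a t ^ q| * ((K - q*t) * (L - q*t))
          ≤ (q * M ^ (q-1) * |a t - b t|) * ((K - q*t) * (L - q*t)) := by
            apply mul_le_mul_of_nonneg_right hpow (le_of_lt (mul_pos hKp hLp))
        _ ≤ (q * M ^ (q-1) * (C * Real.exp (β * t))) * ((K - q*t) * (L - q*t)) := by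
            apply mul_le_mul_of_nonneg_right _ (le_of_lt (mul_pos hKp hLp))
            exact mul_le_mul_of_nonneg_left h1 hMq
        _ = ((q * M ^ (q-1) * C) * (L - q * t)) * ((K - q * t) * Real.exp (β * t)) := by
            ring
    have tlim : Tendsto (fun t => ((q * M ^ (q-1) * C) * (L - q * t)) *
        ((K - q * t) * Real.exp (β * t))) atBot (𝓝 0) := by
      have f1 : Tendsto (fun t : ℝ => (K - (q:ℝ) * t) * Real.exp ((β/2) * t)) atBot (𝓝 0) :=
        my_lin_exp_tendsto K q (β/2) (by linarith)
      have f2 : Tendsto (fun t : ℝ =>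
          ((q * M ^ (q-1) * C) * L - ((q * M ^ (q-1) * C) * q) * t) * Real.exp ((β/2) * t))
          atBot (𝓝 0) :=
        my_lin_exp_tendsto _ _ (β/2) (by linarith)
      have := f2.mul f1
      rw [mul_zero] at this
      apply this.congr
      intro t
      rw [show β * t = β/2 * t + β/2 * t by ring, Real.exp_add]
      ring
    have hle : |K - L| ≤ 0 := by
      exact ge_of_tendsto tlim (eventually_atBot.mpr ⟨T, key⟩)
    have := abs_nonpos_iff.mp hle
    linarith [sub_eq_zero.mp this]
  -- a = b
  have hab : ∀ t ∈ Iic t₀, a t = b t := by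
    intro t ht
    have hpq : a t ^ q = b t ^ q := by rw [haf t ht, hbf t ht, hKL]
    exact (pow_left_strictMonoOn₀ (M₀ := ℝ) (by omega)).injOn
      (by exact (hapos t ht).le) (by exact (hbpos t ht).le) hpq
  -- image
  have himg : a '' Iic t₀ = Ioc 0 (a t₀) := by
    apply Subset.antisymm
    · rintro _ ⟨t, ht, rfl⟩
      exact ⟨hapos t ht, hale t ht⟩
    · rintro x ⟨hx0, hx1⟩
      have hxq : (0:ℝ) < x ^ q := pow_pos hx0 q
      set t := (K - (x^q)⁻¹) / q with htdef
      have ht : t ∈ Iic t₀ := by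
        rw [mem_Iic, htdef, div_le_iff₀ hq0]
        have h1 : (a t₀ ^ q)⁻¹ ≤ (x ^ q)⁻¹ := by
          apply inv_anti₀ hxq
          exact pow_le_pow_left₀ hx0.le hx1 q
        have h2 : (a t₀ ^ q)⁻¹ = K - q * t₀ := hKt t₀ (mem_Iic.mpr le_rfl)
        linarith
      refine ⟨t, ht, ?_⟩
      have hqt : (q:ℝ) * t = K - (x^q)⁻¹ := by
        rw [htdef, mul_comm, div_mul_cancel₀ _ hq0.ne']
      have hpq : a t ^ q = x ^ q := by
        rw [haf t ht]
        have h5 : K - (q:ℝ) * t = (x^q)⁻¹ := by rw [hqt]; ring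
        rw [h5, inv_inv]
      exact (pow_left_strictMonoOn₀ (M₀ := ℝ) (by omega)).injOn
        (by exact (hapos t ht).le) (by exact hx0.le) hpq
  -- tendsto 0
  have htop : Tendsto (fun t : ℝ => K - q * t) atBot atTop := by
    have h1 : Tendsto (fun t : ℝ => (q:ℝ) * t) atBot atBot :=
      Tendsto.const_mul_atBot hq0 tendsto_id
    have h2 := tendsto_neg_atBot_atTop.comp h1
    have h3 := tendsto_atTop_add_const_left atBot K h2
    apply h3.congr
    intro t
    simp [Function.comp, sub_eq_add_neg]
  have ha0 : Tendsto a atBot (𝓝 0) := by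
    rw [NormedAddCommGroup.tendsto_nhds_zero]
    intro ε hε
    filter_upwards [htop.eventually_gt_atTop ((ε^q)⁻¹), eventually_le_atBot t₀] with t h1 h2
    have hap := hapos t h2
    rw [Real.norm_eq_abs, abs_of_pos hap]
    have hεq : (0:ℝ) < ε ^ q := pow_pos hε q
    have hlt : a t ^ q < ε ^ q := by
      rw [haf t h2]
      exact (inv_lt_comm₀ (hKpos t h2) hεq).mpr h1
    exact lt_of_pow_lt_pow_left₀ q hε.le hlt
  refine ⟨hab, hmono, himg, ha0, ?_⟩
  -- flat contact
  intro g hg ℓ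
  have hgf : ∀ x ∈ Ioc (0:ℝ) (a t₀), g x = (K - (x ^ q)⁻¹) / q := by
    intro x hx
    obtain ⟨hg1, hg2⟩ := hg x hx
    have h1 := haf (g x) hg1
    rw [hg2] at h1
    have h2 : (x ^ q)⁻¹ = K - q * g x := by rw [h1, inv_inv]
    rw [eq_div_iff hq0.ne']
    linarith
  have hmem : ∀ᶠ x in 𝓝[>] (0:ℝ), x ∈ Ioc (0:ℝ) (a t₀) :=
    Ioc_mem_nhdsGT_of_mem ⟨le_rfl, hapos t₀ (mem_Iic.mpr le_rfl)⟩
  have hxq : Tendsto (fun x : ℝ => (x ^ q)⁻¹) (𝓝[>] (0:ℝ)) atTop := by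
    apply tendsto_inv_nhdsGT_zero.comp
    rw [tendsto_nhdsWithin_iff]
    constructor
    · apply Tendsto.mono_left _ nhdsWithin_le_nhds
      have : Continuous (fun x : ℝ => x ^ q) := continuous_pow q
      have h := this.tendsto 0
      rwa [zero_pow (by omega : q ≠ 0)] at h
    · filter_upwards [self_mem_nhdsWithin] with x hx
      exact pow_pos (show (0:ℝ) < x from hx) q
  have hgt : Tendsto g (𝓝[>] (0:ℝ)) atBot := by
    have h1 : Tendsto (fun x : ℝ => (K - (x ^ q)⁻¹) / q) (𝓝[>] (0:ℝ)) atBot := by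
      apply Tendsto.atBot_div_const hq0
      apply tendsto_atBot_add_const_left _ K
      exact tendsto_neg_atTop_atBot.comp hxq
    apply h1.congr'
    filter_upwards [hmem] with x hx
    exact (hgf x hx).symm
  have hgev : ∀ᶠ x in 𝓝[>] (0:ℝ), g x ≤ T := hgt.eventually_le_atBot T
  have hO : (fun x => u (g x) - v (g x)) =O[𝓝[>] (0:ℝ)]
      (fun x => Real.exp (β * g x)) := by
    rw [Asymptotics.isBigO_iff]
    refine ⟨C, ?_⟩
    filter_upwards [hgev] with x hx
    have h := (habd (g x) hx).2.1
    rw [Real.norm_eq_abs, Real.abs_exp]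
    exact h
  refine hO.trans_isLittleO ?_
  rw [Asymptotics.isLittleO_iff_tendsto']
  · have base := my_pow_exp_tendsto (β/q) (by positivity) q ℓ hq
    have comp := base.comp tendsto_inv_nhdsGT_zero
    have final := comp.const_mul (Real.exp (β * K / q))
    rw [mul_zero] at final
    apply final.congr'
    filter_upwards [hmem, self_mem_nhdsWithin] with x hx hx0
    have hx0' : (0:ℝ) < x := hx0
    have hgx := hgf x hx
    simp only [Function.comp]
    rw [hgx]
    have harg : β * ((K - (x ^ q)⁻¹) / q) = β * K / q + (-(β/q * (x⁻¹) ^ q)) := by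
      rw [inv_pow]
      field_simp
      ring
    rw [harg, Real.exp_add]
    have hxl : x ^ ℓ ≠ 0 := pow_ne_zero ℓ hx0'.ne'
    field_simp
    rw [← mul_pow, one_div, inv_mul_cancel₀ hx0'.ne', one_pow]
  · filter_upwards [self_mem_nhdsWithin] with x hx h
    exact absurd h (pow_ne_zero ℓ (ne_of_gt hx))
end
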